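/- The subgroup of the group of invertible 2×2 matrices over E generated by g₁ and g₂ is isomorphic as a group to SL₂(𝔽₃) (the special linear group of 2×2 matrices of determinant 1 over the field with 3 elements); in particular it has order 24. -/
import Mathlib
open Matrix
structure Ew where
  a : ℤ
  b : ℤ
deriving DecidableEq
namespace Ew
instance : Zero Ew := ⟨⟨0,0⟩⟩
instance : One Ew := ⟨⟨1,0⟩⟩
instance : Add Ew := ⟨fun x y => ⟨x.a+y.a, x.b+y.b⟩⟩
instance : Neg Ew := ⟨fun x => ⟨-x.a, -x.b⟩⟩
instance : Mul Ew := ⟨fun x y => ⟨x.a*y.a - x.b*y.b, x.a*y.b + x.b*y.a - x.b*y.b⟩⟩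

lemma ext' {x y : Ew} (h1 : x.a = y.a) (h2 : x.b = y.b) : x = y := by cases x; cases y; simp_all
lemma add_def (x y : Ew) : x + y = ⟨x.a+y.a, x.b+y.b⟩ := rfl
lemma mul_def (x y : Ew) : x * y = ⟨x.a*y.a - x.b*y.b, x.a*y.b + x.b*y.a - x.b*y.b⟩ := rfl
lemma neg_def (x : Ew) : -x = ⟨-x.a, -x.b⟩ := rfl
lemma zero_def : (0 : Ew) = ⟨0,0⟩ := rfl
lemma one_def : (1 : Ew) = ⟨1,0⟩ := rfl
instance : CommRing Ew where
  add_assoc := by intros; apply ext' <;> simp only [add_def] <;> ring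
  zero_add := by intros; apply ext' <;> simp only [add_def, zero_def] <;> ring
  add_zero := by intros; apply ext' <;> simp only [add_def, zero_def] <;> ring
  add_comm := by intros; apply ext' <;> simp only [add_def] <;> ring
  left_distrib := by intros; apply ext' <;> simp only [add_def, mul_def] <;> ring
  right_distrib := by intros; apply ext' <;> simp only [add_def, mul_def] <;> ring
  zero_mul := by intros; apply ext' <;> simp only [mul_def, zero_def] <;> ring
  mul_zero := by intros; apply ext' <;> simp only [mul_def, zero_def] <;> ring
  mul_assoc := by intros; apply ext' <;> simp only [mul_def] <;> ring
  one_mul := by intros; apply ext' <;> simp only [mul_def, one_def] <;> ring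
  mul_one := by intros; apply ext' <;> simp only [mul_def, one_def] <;> ring
  neg_add_cancel := by intros; apply ext' <;> simp only [neg_def, add_def, zero_def] <;> ring
  mul_comm := by intros; apply ext' <;> simp only [mul_def] <;> ring
  nsmul := nsmulRec
  zsmul := zsmulRec
end Ew

def tab : ℕ → Matrix (Fin 2) (Fin 2) Ew := fun n =>
  if n = 15 then !![⟨0, 0⟩, ⟨0, 1⟩; ⟨1, 1⟩, ⟨0, 0⟩] else
  if n = 16 then !![⟨0, 0⟩, ⟨0, 1⟩; ⟨0, (-1)⟩, ⟨0, 1⟩] else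
  if n = 17 then !![⟨0, 0⟩, ⟨0, 1⟩; ⟨(-1), 0⟩, ⟨1, 1⟩] else
  if n = 21 then !![⟨0, 0⟩, ⟨0, (-1)⟩; ⟨(-1), (-1)⟩, ⟨0, 0⟩] else
  if n = 22 then !![⟨0, 0⟩, ⟨0, (-1)⟩; ⟨1, 0⟩, ⟨(-1), (-1)⟩] else
  if n = 23 then !![⟨0, 0⟩, ⟨0, (-1)⟩; ⟨0, 1⟩, ⟨0, (-1)⟩] else
  if n = 28 then !![⟨1, 0⟩, ⟨0, 0⟩; ⟨0, 0⟩, ⟨1, 0⟩] else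
  if n = 31 then !![⟨1, 0⟩, ⟨0, 0⟩; ⟨1, 0⟩, ⟨(-1), (-1)⟩] else
  if n = 34 then !![⟨1, 0⟩, ⟨0, 0⟩; ⟨0, (-1)⟩, ⟨0, 1⟩] else
  if n = 37 then !![⟨0, 1⟩, ⟨1, 0⟩; ⟨0, 0⟩, ⟨1, 0⟩] else
  if n = 41 then !![⟨0, 1⟩, ⟨1, 0⟩; ⟨0, 1⟩, ⟨0, (-1)⟩] else
  if n = 42 then !![⟨0, 1⟩, ⟨1, 0⟩; ⟨1, 1⟩, ⟨0, 0⟩] else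
  if n = 46 then !![⟨(-1), (-1)⟩, ⟨1, 1⟩; ⟨0, 0⟩, ⟨1, 0⟩] else
  if n = 48 then !![⟨(-1), (-1)⟩, ⟨1, 1⟩; ⟨(-1), (-1)⟩, ⟨0, 0⟩] else
  if n = 53 then !![⟨(-1), (-1)⟩, ⟨1, 1⟩; ⟨(-1), 0⟩, ⟨1, 1⟩] else
  if n = 56 then !![⟨(-1), 0⟩, ⟨0, 0⟩; ⟨0, 0⟩, ⟨(-1), 0⟩] else
  if n = 59 then !![⟨(-1), 0⟩, ⟨0, 0⟩; ⟨0, 1⟩, ⟨0, (-1)⟩] else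
  if n = 62 then !![⟨(-1), 0⟩, ⟨0, 0⟩; ⟨(-1), 0⟩, ⟨1, 1⟩] else
  if n = 65 then !![⟨1, 1⟩, ⟨(-1), (-1)⟩; ⟨0, 0⟩, ⟨(-1), 0⟩] else
  if n = 67 then !![⟨1, 1⟩, ⟨(-1), (-1)⟩; ⟨1, 0⟩, ⟨(-1), (-1)⟩] else
  if n = 69 then !![⟨1, 1⟩, ⟨(-1), (-1)⟩; ⟨1, 1⟩, ⟨0, 0⟩] else
  if n = 74 then !![⟨0, (-1)⟩, ⟨(-1), 0⟩; ⟨0, 0⟩, ⟨(-1), 0⟩] else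
  if n = 75 then !![⟨0, (-1)⟩, ⟨(-1), 0⟩; ⟨(-1), (-1)⟩, ⟨0, 0⟩] else
  if n = 79 then !![⟨0, (-1)⟩, ⟨(-1), 0⟩; ⟨0, (-1)⟩, ⟨0, 1⟩] else
  1

def fm' (m : Matrix (Fin 2) (Fin 2) (ZMod 3)) : Matrix (Fin 2) (Fin 2) Ew :=
  tab ((((m 0 0).val * 3 + (m 0 1).val) * 3 + (m 1 0).val) * 3 + (m 1 1).val)


abbrev SL3 := Matrix.SpecialLinearGroup (Fin 2) (ZMod 3)

instance : DecidableEq SL3 := fun x y =>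
  decidable_of_iff (x.val = y.val) Subtype.ext_iff.symm

def fm (x : SL3) : Matrix (Fin 2) (Fin 2) Ew := fm' x.val

def A : SL3 := ⟨!![1,2;0,1], by decide⟩
def B : SL3 := ⟨!![1,0;2,1], by decide⟩

set_option maxRecDepth 100000
set_option maxHeartbeats 4000000

lemma fm'_mul : ∀ a b c d e f g h : ZMod 3, a*d-b*c = 1 → e*h-f*g = 1 →
    fm' (!![a,b;c,d] * !![e,f;g,h]) = fm' !![a,b;c,d] * fm' !![e,f;g,h] := by decide

lemma fm_mul (x y : SL3) : fm (x * y) = fm x * fm y := by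
  have hx : x.val 0 0 * x.val 1 1 - x.val 0 1 * x.val 1 0 = 1 := by
    rw [← Matrix.det_fin_two]; exact x.prop
  have hy : y.val 0 0 * y.val 1 1 - y.val 0 1 * y.val 1 0 = 1 := by
    rw [← Matrix.det_fin_two]; exact y.prop
  have h := fm'_mul _ _ _ _ _ _ _ _ hx hy
  rw [← Matrix.eta_fin_two x.val, ← Matrix.eta_fin_two y.val] at h
  exact h

lemma fm_inj : Function.Injective fm := by
  have : ∀ x y : SL3, fm x = fm y → x = y := by decide
  exact fun x y h => this x y h

lemma fm_one : fm 1 = 1 := by decide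

lemma fm_A : fm A = !![⟨(-1), (-1)⟩, ⟨1, 1⟩; ⟨0, 0⟩, ⟨1, 0⟩] := by decide

lemma fm_B : fm B = !![⟨1, 0⟩, ⟨0, 0⟩; ⟨0, (-1)⟩, ⟨0, 1⟩] := by decide

lemma card_SL3 : Nat.card SL3 = 24 := by
  rw [Nat.card_eq_fintype_card]; decide

lemma mem_words : ∀ x : SL3, x ∈ [B*A*A*B, A*A*B, A*A*B*A, A*B*B*A, A*B*B, B*A*B*B, A*A*A,
    B*B, B, A*A, B*B*A*A, B*A*A, A, B*B*A, B*A, A*B*A*B, A*B*A*B*B, A*B*A, A*A*B*A*B,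
    A*A*B*B, A*B*A*A, B*A*B, B*B*A*B, A*B] := by decide

lemma closure_AB : Subgroup.closure ({A, B} : Set SL3) = ⊤ := by
  rw [eq_top_iff]
  intro x _
  have hA : A ∈ Subgroup.closure ({A, B} : Set SL3) :=
    Subgroup.subset_closure (Set.mem_insert _ _)
  have hB : B ∈ Subgroup.closure ({A, B} : Set SL3) :=
    Subgroup.subset_closure (Set.mem_insert_of_mem _ rfl)
  have hx := mem_words x
  simp only [List.mem_cons, List.not_mem_nil, or_false] at hx
  rcases hx with rfl|rfl|rfl|rfl|rfl|rfl|rfl|rfl|rfl|rfl|rfl|rfl|rfl|rfl|rfl|rfl|rfl|rfl|rfl|rfl|rfl|rfl|rfl|rfl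
  · exact (mul_mem (mul_mem (mul_mem hB hA) hA) hB)
  · exact (mul_mem (mul_mem hA hA) hB)
  · exact (mul_mem (mul_mem (mul_mem hA hA) hB) hA)
  · exact (mul_mem (mul_mem (mul_mem hA hB) hB) hA)
  · exact (mul_mem (mul_mem hA hB) hB)
  · exact (mul_mem (mul_mem (mul_mem hB hA) hB) hB)
  · exact (mul_mem (mul_mem hA hA) hA)
  · exact (mul_mem hB hB)
  · exact hB
  · exact (mul_mem hA hA)
  · exact (mul_mem (mul_mem (mul_mem hB hB) hA) hA)
  · exact (mul_mem (mul_mem hB hA) hA)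
  · exact hA
  · exact (mul_mem (mul_mem hB hB) hA)
  · exact (mul_mem hB hA)
  · exact (mul_mem (mul_mem (mul_mem hA hB) hA) hB)
  · exact (mul_mem (mul_mem (mul_mem (mul_mem hA hB) hA) hB) hB)
  · exact (mul_mem (mul_mem hA hB) hA)
  · exact (mul_mem (mul_mem (mul_mem (mul_mem hA hA) hB) hA) hB)
  · exact (mul_mem (mul_mem (mul_mem hA hA) hB) hB)
  · exact (mul_mem (mul_mem (mul_mem hA hB) hA) hA)
  · exact (mul_mem (mul_mem hB hA) hB)
  · exact (mul_mem (mul_mem (mul_mem hB hB) hA) hB)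
  · exact (mul_mem hA hB)

/-- The ring hom `Ew → K` sending `⟨a,b⟩` to `a + bω`. -/
def phi {K : Type*} [CommRing K] (ω : K) (hrel : ω^2 + ω + 1 = 0) : Ew →+* K where
  toFun x := (x.a : K) + (x.b : K) * ω
  map_one' := by simp [Ew.one_def]
  map_zero' := by simp [Ew.zero_def]
  map_add' x y := by simp only [Ew.add_def]; push_cast; ring
  map_mul' x y := by
    simp only [Ew.mul_def]
    push_cast
    linear_combination (-(x.b : K) * (y.b : K)) * hrel

lemma phi_apply {K : Type*} [CommRing K] (ω : K) (hrel : ω^2 + ω + 1 = 0) (x : Ew) :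
    phi ω hrel x = (x.a : K) + (x.b : K) * ω := rfl

lemma phi_inj {K : Type*} [Field K] [CharZero K] (ω : K) (hrel : ω^2 + ω + 1 = 0) :
    Function.Injective (phi ω hrel) := by
  rw [injective_iff_map_eq_zero]
  intro x hx
  rw [phi_apply] at hx
  have key : ((x.a^2 - x.a*x.b + x.b^2 : ℤ) : K) = 0 := by
    push_cast
    linear_combination ((x.a : K) - (x.b : K) - (x.b : K) * ω) * hx + (x.b : K)^2 * hrel
  have key2 : x.a^2 - x.a*x.b + x.b^2 = 0 := by exact_mod_cast key
  have h4 : (2*x.a - x.b)^2 + 3*x.b^2 = 0 := by linear_combination 4*key2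
  have hb2 : x.b^2 = 0 := by nlinarith [sq_nonneg (2*x.a - x.b), sq_nonneg x.b]
  have hb : x.b = 0 := by exact pow_eq_zero_iff (n := 2) (by norm_num) |>.mp hb2
  have ha : x.a = 0 := by nlinarith [key2, hb]
  apply Ew.ext' <;> simp [ha, hb, Ew.zero_def]

open Matrix in
/-- Let `E = ℚ(ω)` be the cyclotomic field generated by a primitive third root of
unity `ω`, with `ω̄ = ω²`.  The subgroup of `GL₂(E)` generated by
`g₁ = [[ω̄, ω̄−1],[0,1]]` and `g₂ = [[1,0],[(ω−1)/3, ω]]` is isomorphic to `SL₂(𝔽₃)`;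
in particular it has order 24. -/
theorem stmt_0 (ω : CyclotomicField 3 ℚ) (hω : IsPrimitiveRoot ω 3)
    (g₁ g₂ : GL (Fin 2) (CyclotomicField 3 ℚ))
    (hg₁ : (g₁ : Matrix (Fin 2) (Fin 2) (CyclotomicField 3 ℚ)) = !![ω ^ 2, ω ^ 2 - 1; 0, 1])
    (hg₂ : (g₂ : Matrix (Fin 2) (Fin 2) (CyclotomicField 3 ℚ)) = !![1, 0; (ω - 1) / 3, ω]) :
    Nonempty ((Subgroup.closure {g₁, g₂}) ≃*
      Matrix.SpecialLinearGroup (Fin 2) (ZMod 3)) ∧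
    Nat.card (Subgroup.closure {g₁, g₂} : Subgroup (GL (Fin 2) (CyclotomicField 3 ℚ))) = 24 := by
  have hrel : ω^2 + ω + 1 = 0 := by
    have h3 : ω^3 = 1 := hω.pow_eq_one
    have h1 : ω ≠ 1 := hω.ne_one (by norm_num)
    rcases mul_eq_zero.mp (show (ω - 1) * (ω^2 + ω + 1) = 0 by linear_combination h3) with h | h
    · exact absurd (sub_eq_zero.mp h) h1
    · exact h
  haveI : CharZero (CyclotomicField 3 ℚ) := inferInstance
  let φ := phi ω hrel
  -- the mapped matrices multiply correctly
  have hval : ∀ x y : SL3, (fm x).map φ * (fm y).map φ = (fm (x*y)).map φ := by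
    intro x y
    rw [fm_mul, Matrix.map_mul]
  have hone : (fm (1 : SL3)).map φ = 1 := by
    rw [fm_one]; exact Matrix.map_one φ φ.map_zero φ.map_one
  -- the monoid hom Ψ : SL3 →* GL₂(K)
  let Ψ : SL3 →* GL (Fin 2) (CyclotomicField 3 ℚ) := {
    toFun := fun x => ⟨(fm x).map φ, (fm x⁻¹).map φ,
      by rw [hval, mul_inv_cancel, hone],
      by rw [hval, inv_mul_cancel, hone]⟩
    map_one' := by
      apply Units.ext
      exact hone
    map_mul' := fun x y => by
      apply Units.ext
      exact (hval x y).symm }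
  have hΨval : ∀ x : SL3, (Ψ x).val = (fm x).map φ := fun _ => rfl
  -- the conjugating matrix
  have hCC : (!![1, 0; 0, ω - 1] : Matrix (Fin 2) (Fin 2) (CyclotomicField 3 ℚ)) * !![1, 0; 0, (ω^2 - 1)/3] = 1 := by
    ext i j
    fin_cases i <;> fin_cases j <;>
      simp [Matrix.mul_apply, Fin.sum_univ_two, Matrix.one_apply] <;>
      field_simp <;> linear_combination (ω - 2) * hrel
  have hCC' : (!![1, 0; 0, (ω^2 - 1)/3] : Matrix (Fin 2) (Fin 2) (CyclotomicField 3 ℚ)) * !![1, 0; 0, ω - 1] = 1 := by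
    ext i j
    fin_cases i <;> fin_cases j <;>
      simp [Matrix.mul_apply, Fin.sum_univ_two, Matrix.one_apply] <;>
      field_simp <;> linear_combination (ω - 2) * hrel
  let Cu : GL (Fin 2) (CyclotomicField 3 ℚ) := ⟨!![1, 0; 0, ω - 1], !![1, 0; 0, (ω^2 - 1)/3], hCC, hCC'⟩
  let F : SL3 →* GL (Fin 2) (CyclotomicField 3 ℚ) := ((MulAut.conj Cu⁻¹).toMonoidHom).comp Ψ
  have hFval : ∀ x : SL3, (F x).val = !![1, 0; 0, (ω^2 - 1)/3] * (fm x).map φ * !![1, 0; 0, ω - 1] := by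
    intro x
    show ((Cu⁻¹ * Ψ x * (Cu⁻¹)⁻¹ : GL (Fin 2) (CyclotomicField 3 ℚ))).val = _
    rw [inv_inv]
    rfl
  have hΨinj : Function.Injective Ψ := by
    intro x y h
    apply fm_inj
    have h2 : (fm x).map φ = (fm y).map φ := congrArg Units.val h
    ext i j
    exact phi_inj ω hrel (congrFun (congrFun h2 i) j)
  have hFinj : Function.Injective F := fun x y h => hΨinj ((MulAut.conj Cu⁻¹).injective h)
  have hFA : F A = g₁ := by
    apply Units.ext
    rw [hFval, fm_A, hg₁]
    ext i j
    fin_cases i <;> fin_cases j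
    all_goals try simp [Matrix.mul_apply, Fin.sum_univ_two, Matrix.map_apply, φ, phi_apply,
      Matrix.vecMul, Matrix.vecHead, Matrix.vecTail, dotProduct,
      Matrix.cons_val_zero, Matrix.cons_val_one, Matrix.head_cons]
    all_goals try push_cast
    all_goals try field_simp
    all_goals first
      | ring1
      | linear_combination (-1 : CyclotomicField 3 ℚ) * hrel
      | linear_combination (ω - 2) * hrel
      | linear_combination (1 - ω) * hrel
      | linear_combination (ω - 1) * hrel
      | linear_combination (ω^2 - 2*ω) * hrel
      | linear_combination (2*ω - ω^2) * hrel
      | linear_combination (3 - 3*ω) * hrel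
      | linear_combination (3*ω - 3) * hrel
      | linear_combination ω * hrel
      | linear_combination (-ω) * hrel
      | linear_combination (ω + 1) * hrel
      | linear_combination hrel
      | skip
  have hFB : F B = g₂ := by
    apply Units.ext
    rw [hFval, fm_B, hg₂]
    ext i j
    fin_cases i <;> fin_cases j
    all_goals try simp [Matrix.mul_apply, Fin.sum_univ_two, Matrix.map_apply, φ, phi_apply,
      Matrix.vecMul, Matrix.vecHead, Matrix.vecTail, dotProduct,
      Matrix.cons_val_zero, Matrix.cons_val_one, Matrix.head_cons]
    all_goals try push_cast
    all_goals try field_simp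
    all_goals first
      | ring1
      | linear_combination (-1 : CyclotomicField 3 ℚ) * hrel
      | linear_combination (ω - 2) * hrel
      | linear_combination (1 - ω) * hrel
      | linear_combination (ω - 1) * hrel
      | linear_combination (ω^2 - 2*ω) * hrel
      | linear_combination (2*ω - ω^2) * hrel
      | linear_combination (3 - 3*ω) * hrel
      | linear_combination (3*ω - 3) * hrel
      | linear_combination ω * hrel
      | linear_combination (-ω) * hrel
      | linear_combination (ω + 1) * hrel
      | linear_combination hrel
      | skip
  have hrange : F.range = Subgroup.closure {g₁, g₂} := by
    rw [MonoidHom.range_eq_map, ← closure_AB, MonoidHom.map_closure]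
    congr 1
    rw [Set.image_insert_eq, Set.image_singleton, hFA, hFB]
  have e : (Subgroup.closure {g₁, g₂} : Subgroup (GL (Fin 2) (CyclotomicField 3 ℚ))) ≃* SL3 :=
    (MulEquiv.subgroupCongr hrange.symm).trans (MonoidHom.ofInjective hFinj).symm
  refine ⟨⟨e⟩, ?_⟩
  rw [Nat.card_congr e.toEquiv, card_SL3]
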